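/- Let p be a prime, f : ℕ → ℕ, and r an integer with r ≥ 1. Then binom(p·r, p)_f ≡ binom(p,p)_f · f(0)^{p·(r−1)} · r (mod p²). -/

import Mathlib

/-- The extended binomial coefficient `binom(k,n)_f`: the sum, over all
`k`-tuples `(π₁,…,π_k)` of nonnegative integers with `π₁ + ⋯ + π_k = n`,
of the products `f(π₁)⋯f(π_k)`. It counts the `f`-weighted integer
compositions of `n` with exactly `k` parts. -/
def extBinom (f : ℕ → ℕ) (k n : ℕ) : ℕ :=
  ∑ π ∈ Finset.Nat.antidiagonalTuple k n, ∏ i, f (π i)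

open Finset Polynomial

lemma coeff_pow_tuple {R : Type*} [CommSemiring R] (Q : R[X]) (k n : ℕ) :
    (Q ^ k).coeff n = ∑ l ∈ Finset.Nat.antidiagonalTuple k n, ∏ i, Q.coeff (l i) := by
  induction k generalizing n with
  | zero =>
    cases n with
    | zero => simp
    | succ n => simp [Finset.Nat.antidiagonalTuple_zero_succ, Polynomial.coeff_one]
  | succ k ih =>
    rw [pow_succ', Polynomial.coeff_mul]
    simp_rw [ih, Finset.mul_sum]
    rw [Finset.sum_sigma']
    refine Finset.sum_nbij' (i := fun x => Fin.cons x.1.1 x.2)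
      (j := fun l => ⟨(l 0, ∑ i, Fin.tail l i), Fin.tail l⟩) ?_ ?_ ?_ ?_ ?_
    · rintro ⟨⟨a, b⟩, l⟩ hx
      simp only [Finset.mem_sigma, Finset.Nat.mem_antidiagonalTuple,
        Finset.mem_antidiagonal] at hx ⊢
      rw [Fin.sum_cons, hx.2, Finset.HasAntidiagonal.mem_antidiagonal.mp hx.1]
    · intro l hl
      simp only [Finset.Nat.mem_antidiagonalTuple, Finset.mem_sigma,
        Finset.mem_antidiagonal] at hl ⊢
      refine ⟨?_, trivial⟩
      rw [← hl, Fin.sum_univ_succ]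
      exact Finset.HasAntidiagonal.mem_antidiagonal.mpr rfl
    · rintro ⟨⟨a, b⟩, l⟩ hx
      simp only [Finset.mem_sigma, Finset.Nat.mem_antidiagonalTuple,
        Finset.mem_antidiagonal] at hx
      simp [Fin.tail_cons, hx.2]
    · intro l hl
      simp [Fin.cons_self_tail]
    · rintro ⟨⟨a, b⟩, l⟩ hx
      simp [Fin.prod_univ_succ, Fin.tail_cons]

/-- The generating polynomial of `f` up to degree `N`. -/
noncomputable def genPoly (f : ℕ → ℕ) (N : ℕ) : Polynomial ℕ :=
  ∑ i ∈ Finset.range (N + 1), Polynomial.C (f i) * Polynomial.X ^ i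

lemma genPoly_coeff (f : ℕ → ℕ) (N m : ℕ) (hm : m ≤ N) :
    (genPoly f N).coeff m = f m := by
  simp only [genPoly, finset_sum_coeff, coeff_C_mul, coeff_X_pow, mul_ite, mul_one, mul_zero]
  rw [Finset.sum_ite_eq (Finset.range (N + 1)) m f, if_pos (Finset.mem_range.mpr (Nat.lt_succ_of_le hm))]

lemma part_le {k n : ℕ} {l : Fin k → ℕ} (hl : l ∈ Finset.Nat.antidiagonalTuple k n)
    (i : Fin k) : l i ≤ n := by
  rw [Finset.Nat.mem_antidiagonalTuple] at hl
  exact hl ▸ Finset.single_le_sum (fun _ _ => Nat.zero_le _) (Finset.mem_univ i)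

lemma extBinom_eq_coeff (f : ℕ → ℕ) (N k n : ℕ) (hn : n ≤ N) :
    extBinom f k n = ((genPoly f N) ^ k).coeff n := by
  rw [coeff_pow_tuple, extBinom]
  refine Finset.sum_congr rfl fun l hl => Finset.prod_congr rfl fun i _ => ?_
  rw [genPoly_coeff _ _ _ (le_trans (part_le hl i) hn)]

lemma extBinom_zero (f : ℕ → ℕ) (k : ℕ) : extBinom f k 0 = f 0 ^ k := by
  simp [extBinom, Finset.Nat.antidiagonalTuple_zero_right]

/-- Key divisibility: `p ∣ extBinom f p n` when `0 < n < p`. -/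
lemma prime_dvd_extBinom (p : ℕ) (hp : p.Prime) (f : ℕ → ℕ) (n : ℕ)
    (h0 : 0 < n) (h1 : n < p) : p ∣ extBinom f p n := by
  haveI : Fact p.Prime := ⟨hp⟩
  have hnd : ¬ p ∣ n := Nat.not_dvd_of_pos_of_lt h0 h1
  have hcast : ((extBinom f p n : ℕ) : ZMod p) = 0 := by
    rw [extBinom_eq_coeff f p p n h1.le]
    have h2 : ((((genPoly f p) ^ p).coeff n : ℕ) : ZMod p)
        = (((genPoly f p).map (Nat.castRingHom (ZMod p))) ^ p).coeff n := by
      rw [← Polynomial.map_pow, Polynomial.coeff_map]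
      simp
    rw [h2, ← Polynomial.map_frobenius_expand (p := p), Polynomial.coeff_map,
      Polynomial.coeff_expand hp.pos, if_neg hnd, map_zero]
  exact (ZMod.natCast_eq_zero_iff _ _).mp hcast

theorem extBinom_babbage_corollary (p : ℕ) (hp : p.Prime) (f : ℕ → ℕ)
    (r : ℕ) (hr : 1 ≤ r) :
    extBinom f (p * r) p ≡
      extBinom f p p * f 0 ^ (p * (r - 1)) * r [MOD p ^ 2] := by
  classical
  have hp0 : 0 < p := hp.pos
  set g : ℕ → ℕ := fun m => extBinom f p m with hg
  set S := Finset.Nat.antidiagonalTuple r p with hS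
  have key : extBinom f (p * r) p = ∑ l ∈ S, ∏ j, g (l j) := by
    rw [extBinom_eq_coeff f p (p * r) p le_rfl, pow_mul, coeff_pow_tuple]
    refine Finset.sum_congr rfl fun l hl => Finset.prod_congr rfl fun j _ => ?_
    exact (extBinom_eq_coeff f p p (l j) (part_le hl j)).symm
  set P : (Fin r → ℕ) → Prop := fun l => ∃ j, l j = p with hP
  have hsplit : (∑ l ∈ S.filter P, ∏ j, g (l j)) + ∑ l ∈ S \ S.filter P, ∏ j, g (l j)
      = ∑ l ∈ S, ∏ j, g (l j) := by
    rw [← Finset.filter_not]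
    exact Finset.sum_filter_add_sum_filter_not S _ _
  -- The filtered set is the image of the "single block" tuples.
  have hD : S.filter P = Finset.image (fun j : Fin r => Pi.single j p) Finset.univ := by
    ext l
    simp only [Finset.mem_filter, Finset.mem_image, Finset.mem_univ, true_and, hS,
      Finset.Nat.mem_antidiagonalTuple, hP]
    constructor
    · rintro ⟨hsum, j, hj⟩
      refine ⟨j, ?_⟩
      have h0 : ∑ i ∈ Finset.univ.erase j, l i = 0 := by
        have h := Finset.add_sum_erase Finset.univ l (Finset.mem_univ j)
        rw [hsum, hj] at h
        exact Nat.add_left_cancel (h.trans (Nat.add_zero p).symm)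
      funext i
      by_cases hij : i = j
      · subst hij; rw [Pi.single_eq_same, hj]
      · rw [Pi.single_eq_of_ne hij]
        exact ((Finset.sum_eq_zero_iff.mp h0) i
          (Finset.mem_erase.mpr ⟨hij, Finset.mem_univ i⟩)).symm
    · rintro ⟨j, rfl⟩
      constructor
      · simp [Finset.sum_pi_single']
      · exact ⟨j, by simp⟩
  have hterm : ∀ j : Fin r, ∏ i, g ((Pi.single j p : Fin r → ℕ) i)
      = extBinom f p p * f 0 ^ (p * (r - 1)) := by
    intro j
    rw [← Finset.mul_prod_erase Finset.univ _ (Finset.mem_univ j), Pi.single_eq_same]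
    have h1 : ∀ i ∈ Finset.univ.erase j, g ((Pi.single j p : Fin r → ℕ) i) = f 0 ^ p := by
      intro i hi
      rw [Pi.single_eq_of_ne (Finset.ne_of_mem_erase hi)]
      exact extBinom_zero f p
    rw [Finset.prod_congr rfl h1, Finset.prod_const,
      Finset.card_erase_of_mem (Finset.mem_univ j), Finset.card_univ, Fintype.card_fin,
      ← pow_mul]
  have hDsum : ∑ l ∈ S.filter P, ∏ j, g (l j)
      = extBinom f p p * f 0 ^ (p * (r - 1)) * r := by
    rw [hD, Finset.sum_image ?hinj]
    · rw [Finset.sum_congr rfl fun j _ => hterm j, Finset.sum_const, Finset.card_univ,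
        Fintype.card_fin, smul_eq_mul, mul_comm]
    case hinj =>
      intro a _ b _ hab
      by_contra hne
      have := congrFun hab a
      beta_reduce at this
      rw [Pi.single_eq_same, Pi.single_eq_of_ne hne] at this
      exact hp0.ne' this
  have hrest : p ^ 2 ∣ ∑ l ∈ S \ S.filter P, ∏ j, g (l j) := by
    refine Finset.dvd_sum fun l hl => ?_
    rw [Finset.mem_sdiff, Finset.mem_filter] at hl
    obtain ⟨hlS, hnP⟩ := hl
    have hsum : ∑ i, l i = p := Finset.Nat.mem_antidiagonalTuple.mp hlS
    have hlt : ∀ j, l j < p := by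
      intro j
      refine lt_of_le_of_ne (part_le hlS j) fun h => hnP ⟨hlS, j, h⟩
    obtain ⟨j₁, hj₁⟩ : ∃ j, l j ≠ 0 := by
      by_contra h
      push_neg at h
      rw [Finset.sum_congr rfl fun i _ => h i, Finset.sum_const_zero] at hsum
      exact hp0.ne' hsum.symm
    obtain ⟨j₂, hne, hj₂⟩ : ∃ j₂, j₂ ≠ j₁ ∧ l j₂ ≠ 0 := by
      by_contra h
      push_neg at h
      have : ∑ i, l i = l j₁ :=
        Finset.sum_eq_single j₁ (fun b _ hb => h b hb) (fun hb => absurd (Finset.mem_univ j₁) hb)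
      exact absurd (hsum ▸ this.symm) (hlt j₁).ne
    have d1 : p ∣ g (l j₁) := prime_dvd_extBinom p hp f _ (Nat.pos_of_ne_zero hj₁) (hlt j₁)
    have d2 : p ∣ g (l j₂) := prime_dvd_extBinom p hp f _ (Nat.pos_of_ne_zero hj₂) (hlt j₂)
    have hprod : ∏ j, g (l j)
        = g (l j₁) * (g (l j₂) * ∏ j ∈ (Finset.univ.erase j₁).erase j₂, g (l j)) := by
      rw [← Finset.mul_prod_erase Finset.univ _ (Finset.mem_univ j₁),
        ← Finset.mul_prod_erase _ _ (Finset.mem_erase.mpr ⟨hne, Finset.mem_univ j₂⟩)]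
    rw [hprod, pow_two]
    exact mul_dvd_mul d1 (d2.mul_right _)
  have hmod : (∑ l ∈ S \ S.filter P, ∏ j, g (l j)) ≡ 0 [MOD p ^ 2] :=
    (Nat.modEq_zero_iff_dvd).mpr hrest
  calc extBinom f (p * r) p
      = (∑ l ∈ S.filter P, ∏ j, g (l j)) + ∑ l ∈ S \ S.filter P, ∏ j, g (l j) := by
        rw [key, hsplit]
    _ ≡ (∑ l ∈ S.filter P, ∏ j, g (l j)) + 0 [MOD p ^ 2] := Nat.ModEq.add_left _ hmod
    _ = extBinom f p p * f 0 ^ (p * (r - 1)) * r := by rw [add_zero, hDsum]
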